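/- Let q ≥ 5 be an odd integer. Then in ℤ[t] the following identity holds: Ψ_2(t) Ψ_q(t) Φ_6(t^{(q−1)/2}) = Ψ_{2q}(t) + t(1−t)² Ψ_{(q−3)/2}(t) Ψ_{(q−1)/2}(t) Ψ_q(t). -/

import Mathlib

open Polynomial

/-- `Ψ_m(t) = 1 + t + ⋯ + t^{m-1} ∈ ℤ[t]`. -/
noncomputable def Psi (m : ℕ) : Polynomial ℤ :=
  ∑ i ∈ Finset.range m, Polynomial.X ^ i

/-- A polynomial is of type CI if it is a (possibly empty) product `Ψ_{m_1} ⋯ Ψ_{m_r}`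
with all `m_i` positive. -/
def IsTypeCI (f : Polynomial ℤ) : Prop :=
  ∃ l : List ℕ, (∀ m ∈ l, 0 < m) ∧ f = (l.map Psi).prod

/-- All complex roots of the integer polynomial `h` lie on the unit circle. -/
def RootsOnUnitCircle (h : Polynomial ℤ) : Prop :=
  ∀ z : ℂ, Polynomial.aeval z h = 0 → ‖z‖ = 1


lemma cyclo6 : cyclotomic 6 ℤ = X ^ 2 - X + 1 := by
  have h := prod_cyclotomic_eq_X_pow_sub_one (by norm_num : 0 < 6) ℤ
  have hd : Nat.divisors 6 = {1, 2, 3, 6} := by decide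
  rw [hd, Finset.prod_insert (by decide), Finset.prod_insert (by decide),
    Finset.prod_pair (by decide), cyclotomic_one, cyclotomic_two,
    cyclotomic_prime ℤ 3] at h
  have h3 : (∑ i ∈ Finset.range 3, (X : ℤ[X]) ^ i) = X ^ 2 + X + 1 := by
    simp [Finset.sum_range_succ]; ring
  rw [h3] at h
  have hne : ((X - 1) * ((X + 1) * (X ^ 2 + X + 1)) : ℤ[X]) ≠ 0 := by
    intro hc
    have := congrArg (Polynomial.eval 2) hc
    simp at this
  apply mul_left_cancel₀ hne
  rw [show (X-1) * ((X+1) * (X^2+X+1)) * cyclotomic 6 ℤ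
      = (X-1) * ((X+1) * ((X^2+X+1) * cyclotomic 6 ℤ)) from by ring, h]
  ring

lemma psi_mul (m : ℕ) : Psi m * (X - 1) = X ^ m - 1 := geom_sum_mul X m

/-- For odd `q ≥ 5`:
`Ψ_2 Ψ_q Φ_6(t^{(q-1)/2}) = Ψ_{2q} + t(1-t)² Ψ_{(q-3)/2} Ψ_{(q-1)/2} Ψ_q`. -/
theorem psi_identity_two (q : ℕ) (hq : Odd q) (h5 : 5 ≤ q) :
    Psi 2 * Psi q * (Polynomial.cyclotomic 6 ℤ).comp (Polynomial.X ^ ((q - 1) / 2)) =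
      Psi (2 * q) + Polynomial.X * (1 - Polynomial.X) ^ 2 *
        Psi ((q - 3) / 2) * Psi ((q - 1) / 2) * Psi q := by
  obtain ⟨j, rfl⟩ : ∃ j, q = 2 * j + 5 := by
    obtain ⟨m, hm⟩ := hq; exact ⟨m - 2, by omega⟩
  have e1 : (2 * j + 5 - 1) / 2 = j + 2 := by omega
  have e2 : (2 * j + 5 - 3) / 2 = j + 1 := by omega
  rw [e1, e2, cyclo6]
  have hcomp : ((X : ℤ[X]) ^ 2 - X + 1).comp (X ^ (j + 2))
      = (X ^ (j+2)) ^ 2 - X ^ (j+2) + 1 := by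
    simp [sub_comp, add_comp, pow_comp, X_comp, one_comp]
  rw [hcomp]
  have hne : (((X : ℤ[X]) - 1) ^ 3) ≠ 0 := by
    intro hc
    have := congrArg (Polynomial.eval 2) hc
    simp at this
  apply mul_right_cancel₀ hne
  have R2 := psi_mul 2
  have Rq := psi_mul (2 * j + 5)
  have R2q := psi_mul (2 * (2 * j + 5))
  have Ra := psi_mul (j + 1)
  have Rb := psi_mul (j + 2)
  linear_combination
    Psi (2*j+5) * ((X^(j+2))^2 - X^(j+2) + 1) * (X-1)^2 * R2
    + (X^2 - 1) * ((X^(j+2))^2 - X^(j+2) + 1) * (X-1) * Rq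
    - (X-1)^2 * R2q
    - X * (1-X)^2 * Psi (j+2) * Psi (2*j+5) * (X-1)^2 * Ra
    - X * (1-X)^2 * (X^(j+1) - 1) * Psi (2*j+5) * (X-1) * Rb
    - X * (1-X)^2 * (X^(j+1) - 1) * (X^(j+2) - 1) * Rq
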